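/- Suppose ζ : ℝ₊ → ℝ₊ is C² with ζ' > 0, ζ(μ) - μζ'(μ) ≥ 0, ζ'(μ)+2μζ''(μ) ≥ 0 for μ > 0, lim_{μ→0} ζ(μ)/μ = 1, and ζ(μ) ~ c_b·μ^b as μ → ∞ for some c_b > 0 and b ∈ ℝ (meaning ζ(μ)/μ^b → c_b). Then 1/2 ≤ b ≤ 1. -/

import Mathlib

open Filter

/-- If `ζ : ℝ₊ → ℝ₊` is `C²`, satisfies (R1)–(R3), and `ζ(μ) ~ c_b·μ^b` as
`μ → ∞` with `c_b > 0`, then `1/2 ≤ b ≤ 1`. -/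
theorem zeta_power_law_exponent (ζ ζ' ζ'' : ℝ → ℝ) (b c_b : ℝ)
    (hderiv : ∀ μ, 0 < μ → HasDerivAt ζ (ζ' μ) μ)
    (hderiv' : ∀ μ, 0 < μ → HasDerivAt ζ' (ζ'' μ) μ)
    (hpos : ∀ μ, 0 < μ → 0 < ζ μ)
    (hζ' : ∀ μ, 0 < μ → 0 < ζ' μ)
    (hR2 : ∀ μ, 0 < μ → 0 ≤ ζ μ - μ * ζ' μ)
    (hR3 : ∀ μ, 0 < μ → 0 ≤ ζ' μ + 2 * μ * ζ'' μ)
    (hR1 : Tendsto (fun μ => ζ μ / μ) (nhdsWithin 0 (Set.Ioi 0)) (nhds 1))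
    (hcb : 0 < c_b)
    (hinfty : Tendsto (fun μ => ζ μ / μ ^ b) atTop (nhds c_b)) :
    1/2 ≤ b ∧ b ≤ 1 := by
  have hIoi : interior (Set.Ioi (0:ℝ)) = Set.Ioi 0 := isOpen_Ioi.interior_eq
  -- derivative of ζ x / x
  have hfd : ∀ μ : ℝ, 0 < μ → HasDerivAt (fun x => ζ x / x)
      ((ζ' μ * μ - ζ μ * 1) / μ ^ 2) μ := fun μ hμ =>
    (hderiv μ hμ).div (hasDerivAt_id μ) (ne_of_gt hμ)
  -- ζ x / x is antitone on (0,∞)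
  have hanti : AntitoneOn (fun x => ζ x / x) (Set.Ioi 0) := by
    apply antitoneOn_of_deriv_nonpos (convex_Ioi 0)
    · exact fun μ hμ => (hfd μ hμ).continuousAt.continuousWithinAt
    · rw [hIoi]; exact fun μ hμ => (hfd μ hμ).differentiableAt.differentiableWithinAt
    · rw [hIoi]; intro μ hμ
      rw [(hfd μ hμ).deriv]
      apply div_nonpos_of_nonpos_of_nonneg _ (by positivity)
      have := hR2 μ hμ; nlinarith
  -- ζ μ ≤ μ for μ > 0
  have hle_one : ∀ μ : ℝ, 0 < μ → ζ μ / μ ≤ 1 := by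
    intro μ hμ
    refine ge_of_tendsto hR1 ?_
    filter_upwards [Ioo_mem_nhdsGT hμ] with ε hε
    exact hanti hε.1 hμ hε.2.le
  -- ζ ε → 0 as ε → 0⁺
  have hζ0 : Tendsto ζ (nhdsWithin 0 (Set.Ioi 0)) (nhds 0) := by
    have hid : Tendsto (fun ε : ℝ => ε) (nhdsWithin 0 (Set.Ioi 0)) (nhds 0) :=
      tendsto_id.mono_left nhdsWithin_le_nhds
    have := hR1.mul hid
    rw [one_mul] at this
    refine this.congr' ?_
    filter_upwards [self_mem_nhdsWithin] with ε (hε : (0:ℝ) < ε)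
    field_simp
  -- h := 2 μ ζ' μ - ζ μ is monotone on (0,∞)
  have hhd : ∀ μ : ℝ, 0 < μ → HasDerivAt (fun x => 2 * x * ζ' x - ζ x)
      ((2 * ζ' μ + 2 * μ * ζ'' μ) - ζ' μ) μ := by
    intro μ hμ
    have h1 : HasDerivAt (fun x : ℝ => 2 * x) 2 μ := by
      simpa using (hasDerivAt_id μ).const_mul (2:ℝ)
    have h2 := (h1.fun_mul (hderiv' μ hμ)).fun_sub (hderiv μ hμ)
    convert h2 using 1
  have hmono : MonotoneOn (fun x => 2 * x * ζ' x - ζ x) (Set.Ioi 0) := by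
    apply monotoneOn_of_deriv_nonneg (convex_Ioi 0)
    · exact fun μ hμ => (hhd μ hμ).continuousAt.continuousWithinAt
    · rw [hIoi]; exact fun μ hμ => (hhd μ hμ).differentiableAt.differentiableWithinAt
    · rw [hIoi]; intro μ hμ
      rw [(hhd μ hμ).deriv]
      have := hR3 μ hμ; linarith
  -- 2 μ ζ' μ - ζ μ ≥ 0
  have hkey : ∀ μ : ℝ, 0 < μ → 0 ≤ 2 * μ * ζ' μ - ζ μ := by
    intro μ hμ
    have hneg : Tendsto (fun ε => -ζ ε) (nhdsWithin 0 (Set.Ioi 0)) (nhds 0) := by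
      simpa using hζ0.neg
    refine le_of_tendsto hneg ?_
    filter_upwards [Ioo_mem_nhdsGT hμ] with ε hε
    have h1 : 2 * ε * ζ' ε - ζ ε ≤ 2 * μ * ζ' μ - ζ μ := hmono hε.1 hμ hε.2.le
    have h2 : 0 < ζ' ε := hζ' ε hε.1
    nlinarith [hε.1.le]
  -- g := ζ x ^ 2 / x is monotone on (0,∞)
  have hgd : ∀ μ : ℝ, 0 < μ → HasDerivAt (fun x => ζ x ^ 2 / x)
      ((2 * ζ μ * ζ' μ * μ - ζ μ ^ 2 * 1) / μ ^ 2) μ := by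
    intro μ hμ
    have h1 : HasDerivAt (fun x => ζ x ^ 2) (2 * ζ μ * ζ' μ) μ := by
      have := (hderiv μ hμ).fun_pow 2
      exact this.congr_deriv (by norm_num)
    exact h1.div (hasDerivAt_id μ) (ne_of_gt hμ)
  have hgmono : MonotoneOn (fun x => ζ x ^ 2 / x) (Set.Ioi 0) := by
    apply monotoneOn_of_deriv_nonneg (convex_Ioi 0)
    · exact fun μ hμ => (hgd μ hμ).continuousAt.continuousWithinAt
    · rw [hIoi]; exact fun μ hμ => (hgd μ hμ).differentiableAt.differentiableWithinAt
    · rw [hIoi]; intro μ hμ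
      rw [(hgd μ hμ).deriv]
      apply div_nonneg _ (by positivity)
      have h1 := hkey μ hμ
      have h2 := (hpos μ hμ).le
      nlinarith
  -- lower bound ζ μ ≥ ζ 1 * μ ^ (1/2) for μ ≥ 1
  have hlow : ∀ μ : ℝ, 1 ≤ μ → ζ 1 * μ ^ ((1:ℝ)/2) ≤ ζ μ := by
    intro μ hμ
    have hμ0 : (0:ℝ) < μ := lt_of_lt_of_le one_pos hμ
    have h1 : ζ 1 ^ 2 / 1 ≤ ζ μ ^ 2 / μ :=
      hgmono (Set.mem_Ioi.2 one_pos) (Set.mem_Ioi.2 hμ0) hμ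
    have h2 : ζ 1 ^ 2 * μ ≤ ζ μ ^ 2 := by
      rw [div_one] at h1
      rw [le_div_iff₀ hμ0] at h1
      linarith
    have hsq : (μ ^ ((1:ℝ)/2)) * (μ ^ ((1:ℝ)/2)) = μ := by
      rw [← Real.rpow_add hμ0]; norm_num
    have hz1 : 0 < ζ 1 := hpos 1 one_pos
    have hzμ : 0 < ζ μ := hpos μ hμ0
    nlinarith [Real.rpow_nonneg hμ0.le ((1:ℝ)/2)]
  constructor
  · -- 1/2 ≤ b
    by_contra hb
    push_neg at hb
    have hexp : (0:ℝ) < 1/2 - b := by linarith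
    have hz1 : 0 < ζ 1 := hpos 1 one_pos
    have htop : Tendsto (fun μ : ℝ => ζ 1 * μ ^ ((1:ℝ)/2 - b)) atTop atTop :=
      (tendsto_rpow_atTop hexp).const_mul_atTop hz1
    have hge : ∀ᶠ μ : ℝ in atTop, ζ 1 * μ ^ ((1:ℝ)/2 - b) ≤ ζ μ / μ ^ b := by
      filter_upwards [eventually_ge_atTop (1:ℝ)] with μ hμ
      have hμ0 : (0:ℝ) < μ := lt_of_lt_of_le one_pos hμ
      have hb0 : (0:ℝ) < μ ^ b := Real.rpow_pos_of_pos hμ0 b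
      rw [Real.rpow_sub hμ0, ← mul_div_assoc]
      gcongr
      exact hlow μ hμ
    have : Tendsto (fun μ => ζ μ / μ ^ b) atTop atTop :=
      tendsto_atTop_mono' atTop hge htop
    exact not_tendsto_atTop_of_tendsto_nhds hinfty this
  · -- b ≤ 1
    by_contra hb
    push_neg at hb
    have h0 : Tendsto (fun μ : ℝ => μ ^ (1 - b)) atTop (nhds 0) := by
      have := tendsto_rpow_neg_atTop (y := b - 1) (by linarith)
      convert this using 2 with μ
      ring_nf
    have hle : ∀ᶠ μ : ℝ in atTop, ζ μ / μ ^ b ≤ μ ^ (1 - b) := by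
      filter_upwards [eventually_ge_atTop (1:ℝ)] with μ hμ
      have hμ0 : (0:ℝ) < μ := lt_of_lt_of_le one_pos hμ
      have hζμ : ζ μ ≤ μ := by
        have := hle_one μ hμ0
        rw [div_le_one hμ0] at this
        exact this
      rw [Real.rpow_sub hμ0, Real.rpow_one]
      gcongr
    have : c_b ≤ 0 := le_of_tendsto_of_tendsto hinfty h0 hle
    linarith
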